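/- Let n ≥ 3 and let A, B be symmetric n×n matrices over a field K of characteristic zero such that F(x,y) = det(Ax − By) has n distinct roots in P¹(K̄), with factorization F(x,y) = ∏ᵢ(sᵢx − tᵢy) over the splitting field L of F. Then A and B can be simultaneously diagonalized by a congruence transformation defined over L: there exists U ∈ GL_n(L) with UᵀAU and UᵀBU both diagonal. -/

import Mathlib

open Matrix

/-- Auxiliary: simultaneous diagonalization when the first matrix of the pencil is invertible. -/
theorem aux_simul_diag {L : Type} [Field L] {n : ℕ}
    (C D : Matrix (Fin n) (Fin n) L) (hC : C.IsSymm) (hD : D.IsSymm)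
    (hCu : IsUnit C.det)
    (s t : Fin n → L)
    (hfact : ∀ x y : L, (x • C - y • D).det = ∏ i : Fin n, (s i * x - t i * y))
    (hdist : ∀ i j : Fin n, i ≠ j → s i * t j - s j * t i ≠ 0) :
    ∃ U : Matrix (Fin n) (Fin n) L, IsUnit U.det ∧
      (Uᵀ * C * U).IsDiag ∧ (Uᵀ * D * U).IsDiag := by
  classical
  have hdetC : C.det = ∏ i, s i := by simpa using hfact 1 0
  have hs : ∀ i, s i ≠ 0 := by
    intro i hi
    apply hCu.ne_zero
    rw [hdetC]
    exact Finset.prod_eq_zero (Finset.mem_univ i) hi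
  set lam : Fin n → L := fun i => t i / s i with hlam
  have hlaminj : Function.Injective lam := by
    intro i j hij
    by_contra hne
    apply hdist i j hne
    have hij' : t i * s j = t j * s i := (div_eq_div_iff (hs i) (hs j)).1 hij
    linear_combination -hij'
  have hev : ∀ i, ∃ w : Fin n → L, w ≠ 0 ∧ (lam i • C - D) *ᵥ w = 0 := by
    intro i
    have hdet : (lam i • C - D).det = 0 := by
      have h := hfact (lam i) 1
      rw [one_smul] at h
      rw [h]
      apply Finset.prod_eq_zero (Finset.mem_univ i)
      simp only [hlam, mul_one]
      rw [mul_div_assoc', mul_comm, mul_div_assoc, div_self (hs i), mul_one, sub_self]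
    obtain ⟨w, hw0, hw⟩ := (Matrix.exists_mulVec_eq_zero_iff).2 hdet
    exact ⟨w, hw0, hw⟩
  choose v hv0 hveq using hev
  have heig : ∀ i, D *ᵥ v i = lam i • (C *ᵥ v i) := by
    intro i
    have h := hveq i
    rw [Matrix.sub_mulVec, sub_eq_zero] at h
    rw [← h, Matrix.smul_mulVec]
  have hli : LinearIndependent L v := by
    apply Module.End.eigenvectors_linearIndependent' ((C⁻¹ * D).mulVecLin) lam hlaminj
    intro i
    constructor
    · rw [Module.End.mem_eigenspace_iff]
      show (C⁻¹ * D) *ᵥ v i = lam i • v i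
      rw [← Matrix.mulVec_mulVec, heig i, Matrix.mulVec_smul, Matrix.mulVec_mulVec,
        Matrix.nonsing_inv_mul C hCu, Matrix.one_mulVec]
    · exact hv0 i
  set W : Matrix (Fin n) (Fin n) L := Matrix.of v with hW
  have hWu : IsUnit W := Matrix.linearIndependent_rows_iff_isUnit.1 hli
  have entry : ∀ (M : Matrix (Fin n) (Fin n) L) (i j : Fin n),
      (Wᵀᵀ * M * Wᵀ) i j = v i ⬝ᵥ (M *ᵥ v j) := by
    intro M i j
    rw [transpose_transpose]
    simp only [Matrix.mul_apply, Matrix.transpose_apply, Matrix.mulVec, dotProduct,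
      hW, Matrix.of_apply, Finset.sum_mul, Finset.mul_sum]
    rw [Finset.sum_comm]
    exact Finset.sum_congr rfl fun k _ => Finset.sum_congr rfl fun l _ => by ring
  have key : ∀ i j : Fin n, i ≠ j →
      v i ⬝ᵥ (C *ᵥ v j) = 0 ∧ v i ⬝ᵥ (D *ᵥ v j) = 0 := by
    intro i j hij
    have symC : v i ⬝ᵥ (C *ᵥ v j) = v j ⬝ᵥ (C *ᵥ v i) := by
      rw [Matrix.dotProduct_mulVec, ← hC.eq, Matrix.vecMul_transpose, dotProduct_comm, hC.eq]
    have e1 : v i ⬝ᵥ (D *ᵥ v j) = lam j * (v i ⬝ᵥ (C *ᵥ v j)) := by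
      rw [heig j, dotProduct_smul, smul_eq_mul]
    have e2 : v i ⬝ᵥ (D *ᵥ v j) = lam i * (v i ⬝ᵥ (C *ᵥ v j)) := by
      rw [Matrix.dotProduct_mulVec, ← hD.eq, Matrix.vecMul_transpose, dotProduct_comm,
        heig i, dotProduct_smul, smul_eq_mul, ← symC]
    have hlne : lam j - lam i ≠ 0 := sub_ne_zero.2 fun h => hij (hlaminj h).symm
    have hc : (lam j - lam i) * (v i ⬝ᵥ (C *ᵥ v j)) = 0 := by linear_combination e2 - e1
    have hc0 : v i ⬝ᵥ (C *ᵥ v j) = 0 := (mul_eq_zero.1 hc).resolve_left hlne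
    exact ⟨hc0, by rw [e1, hc0, mul_zero]⟩
  refine ⟨Wᵀ, ?_, ?_, ?_⟩
  · rw [Matrix.det_transpose]
    exact (Matrix.isUnit_iff_isUnit_det W).1 hWu
  · intro i j hij
    rw [entry C i j]
    exact (key i j hij).1
  · intro i j hij
    rw [entry D i j]
    exact (key i j hij).2

theorem stmt12 {K L : Type} [Field K] [CharZero K] [Field L] [Algebra K L]
    {n : ℕ} (hn : 3 ≤ n)
    (A B : Matrix (Fin n) (Fin n) K) (hA : A.IsSymm) (hB : B.IsSymm)
    (s t : Fin n → L)
    -- over the splitting field `L`, the binary form `det(Ax - By)` factors completely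
    (hfact : ∀ x y : L,
      (x • (A.map (algebraMap K L)) - y • (B.map (algebraMap K L))).det =
        ∏ i : Fin n, (s i * x - t i * y))
    (hne : ∃ x y : L,
      (x • (A.map (algebraMap K L)) - y • (B.map (algebraMap K L))).det ≠ 0)
    -- the `n` roots are pairwise distinct in `P¹`
    (hdist : ∀ i j : Fin n, i ≠ j → s i * t j - s j * t i ≠ 0) :
    ∃ U : Matrix (Fin n) (Fin n) L, IsUnit U.det ∧
      (Uᵀ * A.map (algebraMap K L) * U).IsDiag ∧
      (Uᵀ * B.map (algebraMap K L) * U).IsDiag := by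
  classical
  obtain ⟨x0, y0, hCne⟩ := hne
  set A₁ := A.map (algebraMap K L) with hA₁def
  set B₁ := B.map (algebraMap K L) with hB₁def
  have hA₁ : A₁.IsSymm := hA.map _
  have hB₁ : B₁.IsSymm := hB.map _
  have hC0 : ¬(x0 = 0 ∧ y0 = 0) := by
    rintro ⟨rfl, rfl⟩
    apply hCne
    have : (0 : L) • A₁ - (0 : L) • B₁ = 0 := by simp
    rw [this]
    haveI : Nonempty (Fin n) := ⟨⟨0, by omega⟩⟩
    exact Matrix.det_zero
  obtain ⟨x1, y1, hδ⟩ : ∃ x1 y1 : L, x0 * y1 - x1 * y0 ≠ 0 := by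
    by_cases h : x0 = 0
    · have hy : y0 ≠ 0 := fun h' => hC0 ⟨h, h'⟩
      exact ⟨1, 0, by simpa [h] using hy⟩
    · exact ⟨0, 1, by simpa using h⟩
  set δ : L := x0 * y1 - x1 * y0 with hδdef
  set C := x0 • A₁ - y0 • B₁ with hCdef
  set D := x1 • A₁ - y1 • B₁ with hDdef
  have hCsym : C.IsSymm := (hA₁.smul x0).sub (hB₁.smul y0)
  have hDsym : D.IsSymm := (hA₁.smul x1).sub (hB₁.smul y1)
  have hCu : IsUnit C.det := isUnit_iff_ne_zero.2 hCne
  set s' : Fin n → L := fun i => s i * x0 - t i * y0 with hs'def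
  set t' : Fin n → L := fun i => s i * x1 - t i * y1 with ht'def
  have hfact' : ∀ x y : L, (x • C - y • D).det = ∏ i : Fin n, (s' i * x - t' i * y) := by
    intro x y
    have hmat : x • C - y • D = (x * x0 - y * x1) • A₁ - (x * y0 - y * y1) • B₁ := by
      rw [hCdef, hDdef]
      module
    rw [hmat, hfact]
    exact Finset.prod_congr rfl fun i _ => by simp only [hs'def, ht'def]; ring
  have hdist' : ∀ i j : Fin n, i ≠ j → s' i * t' j - s' j * t' i ≠ 0 := by
    intro i j hij
    have heq : s' i * t' j - s' j * t' i = -((s i * t j - s j * t i) * δ) := by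
      simp only [hs'def, ht'def, hδdef]; ring
    rw [heq]
    exact neg_ne_zero.2 (mul_ne_zero (hdist i j hij) hδ)
  obtain ⟨U, hU, h1, h2⟩ := aux_simul_diag C D hCsym hDsym hCu s' t' hfact' hdist'
  have hA₁eq : A₁ = δ⁻¹ • (y1 • C - y0 • D) := by
    have : y1 • C - y0 • D = δ • A₁ := by rw [hCdef, hDdef, hδdef]; module
    rw [this, smul_smul, inv_mul_cancel₀ hδ, one_smul]
  have hB₁eq : B₁ = δ⁻¹ • (x1 • C - x0 • D) := by
    have : x1 • C - x0 • D = δ • B₁ := by rw [hCdef, hDdef, hδdef]; module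
    rw [this, smul_smul, inv_mul_cancel₀ hδ, one_smul]
  refine ⟨U, hU, ?_, ?_⟩
  · intro i j hij
    rw [hA₁eq]
    simp only [Matrix.mul_smul, Matrix.smul_mul, Matrix.mul_sub, Matrix.sub_mul,
      Matrix.smul_apply, Matrix.sub_apply, smul_eq_mul]
    rw [h1 hij, h2 hij]
    ring
  · intro i j hij
    rw [hB₁eq]
    simp only [Matrix.mul_smul, Matrix.smul_mul, Matrix.mul_sub, Matrix.sub_mul,
      Matrix.smul_apply, Matrix.sub_apply, smul_eq_mul]
    rw [h1 hij, h2 hij]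
    ring
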